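/- Let X₀, X₁, X₂ be independent integrable random vectors in ℝ^d on a probability space, and set Z₁ := X₀ + X₁, Z₂ := X₀ + X₂. Let φ₁(ω) := E[e^{i ω·X₁}] and ψ(ω₁, ω₂) := E[e^{i ω₁·Z₁ + i ω₂·Z₂}]. If ψ is nowhere vanishing, then for every ω ∈ ℝ^d: φ₁(ω) = exp( −i ω·E[X₀] + ∫₀¹ (∇₁ψ(αω, −αω) / ψ(αω, −αω)) · ω dα ), where ∇₁ denotes the gradient with respect to the first argument. -/

import Mathlib

open MeasureTheory Complex ProbabilityTheory

noncomputable section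

/-- Gradient of a `ℂ`-valued function on `ℝ^d` (equals `∇Re ξ + i ∇Im ξ` componentwise). -/
def grad {d : ℕ} (ξ : (Fin d → ℝ) → ℂ) (ω : Fin d → ℝ) : Fin d → ℂ :=
  fun j => fderiv ℝ ξ ω (Pi.single j 1)

/-- Dot product `u·v` of a real vector with a complex vector. -/
def rcDot {d : ℕ} (u : Fin d → ℝ) (v : Fin d → ℂ) : ℂ :=
  ∑ j, (u j : ℂ) * v j
open MeasureTheory Complex ProbabilityTheory
noncomputable section
namespace KotAux

variable {d : ℕ} {Ω : Type*} [MeasurableSpace Ω] {μ : Measure Ω}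

/-- the linear map `v ↦ ∑ j, v j * y j` -/
def dotL (y : Fin d → ℝ) : (Fin d → ℝ) →L[ℝ] ℝ :=
  ∑ j, y j • (ContinuousLinearMap.proj j : ((Fin d → ℝ)) →L[ℝ] ℝ)

lemma dotL_apply (y v : Fin d → ℝ) : dotL y v = ∑ j, v j * y j := by
  simp [dotL, mul_comm]

lemma continuous_dotL : Continuous (dotL (d := d)) := by
  apply continuous_finset_sum
  intro j _
  exact (continuous_apply j).smul continuous_const

lemma norm_dotL_le (y : Fin d → ℝ) : ‖dotL y‖ ≤ ∑ j, |y j| := by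
  refine (norm_sum_le _ _).trans (Finset.sum_le_sum fun j _ => ?_)
  refine (norm_smul_le (y j) ((ContinuousLinearMap.proj j : ((Fin d → ℝ)) →L[ℝ] ℝ))).trans ?_
  have h1 : ‖(ContinuousLinearMap.proj j : ((Fin d → ℝ)) →L[ℝ] ℝ)‖ ≤ 1 := by
    refine ContinuousLinearMap.opNorm_le_bound _ zero_le_one fun x => ?_
    simpa using (norm_le_pi_norm x j).trans (by simp)
  calc ‖y j‖ * ‖(ContinuousLinearMap.proj j : ((Fin d → ℝ)) →L[ℝ] ℝ)‖
      ≤ ‖y j‖ * 1 := by gcongr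
    _ = |y j| := by simp

def chF (μ : Measure Ω) (Y : Ω → Fin d → ℝ) (w : Fin d → ℝ) : ℂ :=
  ∫ a, Complex.exp (Complex.I * ((dotL (Y a) w : ℝ) : ℂ)) ∂μ

def chDi (Y : Ω → Fin d → ℝ) (w : Fin d → ℝ) (a : Ω) : (Fin d → ℝ) →L[ℝ] ℂ :=
  Complex.exp (Complex.I * ((dotL (Y a) w : ℝ) : ℂ)) •
    (Complex.I • (Complex.ofRealCLM.comp (dotL (Y a))))

def chD (μ : Measure Ω) (Y : Ω → Fin d → ℝ) (w : Fin d → ℝ) : (Fin d → ℝ) →L[ℝ] ℂ :=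
  ∫ a, chDi Y w a ∂μ

lemma hasFDerivAt_exp_dot (y w : Fin d → ℝ) :
    HasFDerivAt (fun w => Complex.exp (Complex.I * ((dotL y w : ℝ) : ℂ)))
      (Complex.exp (Complex.I * ((dotL y w : ℝ) : ℂ)) •
        (Complex.I • (Complex.ofRealCLM.comp (dotL y)))) w := by
  have h1 : HasFDerivAt (fun w : Fin d → ℝ => ((dotL y w : ℝ) : ℂ))
      (Complex.ofRealCLM.comp (dotL y)) w :=
    Complex.ofRealCLM.hasFDerivAt.comp w (dotL y).hasFDerivAt
  exact (h1.const_mul Complex.I).cexp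

lemma norm_exp_I_mul (r : ℝ) : ‖Complex.exp (Complex.I * (r : ℂ))‖ = 1 := by
  simp [Complex.norm_exp]

lemma continuous_exp_dot_fun (w : Fin d → ℝ) :
    Continuous fun y : Fin d → ℝ => Complex.exp (Complex.I * ((dotL y w : ℝ) : ℂ)) := by
  simp only [dotL_apply]
  fun_prop

lemma aesm_exp_dot (Y : Ω → Fin d → ℝ) (hY : Measurable Y) (w : Fin d → ℝ) :
    AEStronglyMeasurable (fun a => Complex.exp (Complex.I * ((dotL (Y a) w : ℝ) : ℂ))) μ :=
  ((continuous_exp_dot_fun w).comp_stronglyMeasurable hY.stronglyMeasurable).aestronglyMeasurable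

lemma continuous_chDi_fun (w : Fin d → ℝ) :
    Continuous fun y : Fin d → ℝ =>
      Complex.exp (Complex.I * ((dotL y w : ℝ) : ℂ)) •
        (Complex.I • (Complex.ofRealCLM.comp (dotL y))) := by
  refine (continuous_exp_dot_fun w).smul
    ((?_ : Continuous fun y : Fin d → ℝ => Complex.ofRealCLM.comp (dotL y)).const_smul Complex.I)
  exact (ContinuousLinearMap.compL ℝ (Fin d → ℝ) ℝ ℂ Complex.ofRealCLM).continuous.comp
    continuous_dotL

lemma aesm_chDi (Y : Ω → Fin d → ℝ) (hY : Measurable Y) (w : Fin d → ℝ) :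
    AEStronglyMeasurable (chDi Y w) μ :=
  ((continuous_chDi_fun w).comp_stronglyMeasurable hY.stronglyMeasurable).aestronglyMeasurable

lemma integrable_coord (Y : Ω → Fin d → ℝ) (hint : Integrable Y μ) (j : Fin d) :
    Integrable (fun a => Y a j) μ :=
  (ContinuousLinearMap.proj j : ((Fin d → ℝ)) →L[ℝ] ℝ).integrable_comp hint

lemma integrable_absSum (Y : Ω → Fin d → ℝ) (hint : Integrable Y μ) :
    Integrable (fun a => ∑ j, |Y a j|) μ :=
  integrable_finset_sum _ fun j _ => (integrable_coord Y hint j).abs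

lemma norm_chDi_le (Y : Ω → Fin d → ℝ) (w : Fin d → ℝ) (a : Ω) :
    ‖chDi Y w a‖ ≤ ∑ j, |Y a j| := by
  unfold chDi
  refine (norm_smul_le (Complex.exp (Complex.I * ((dotL (Y a) w : ℝ) : ℂ)))
    (Complex.I • (Complex.ofRealCLM.comp (dotL (Y a))))).trans ?_
  rw [norm_exp_I_mul, one_mul]
  refine (norm_smul_le Complex.I (Complex.ofRealCLM.comp (dotL (Y a)))).trans ?_
  rw [Complex.norm_I, one_mul]
  refine (Complex.ofRealCLM.opNorm_comp_le _).trans ?_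
  rw [show ‖Complex.ofRealCLM‖ = 1 from Complex.ofRealCLM_norm, one_mul]
  exact norm_dotL_le _

lemma integrable_chDi [IsProbabilityMeasure μ] (Y : Ω → Fin d → ℝ) (hY : Measurable Y)
    (hint : Integrable Y μ) (w : Fin d → ℝ) : Integrable (chDi Y w) μ :=
  (integrable_absSum Y hint).mono' (aesm_chDi Y hY w)
    (Filter.Eventually.of_forall fun a => norm_chDi_le Y w a)

lemma hasFDerivAt_chF [IsProbabilityMeasure μ] (Y : Ω → Fin d → ℝ) (hY : Measurable Y)
    (hint : Integrable Y μ) (w : Fin d → ℝ) :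
    HasFDerivAt (chF μ Y) (chD μ Y w) w := by
  refine hasFDerivAt_integral_of_dominated_of_fderiv_le (F' := fun x a => chDi Y x a)
    (bound := fun a => ∑ j, |Y a j|) (Metric.ball_mem_nhds w one_pos)
    (Filter.Eventually.of_forall fun x => aesm_exp_dot Y hY x) ?_ (aesm_chDi Y hY w)
    (Filter.Eventually.of_forall fun a x _ => norm_chDi_le Y x a)
    (integrable_absSum Y hint)
    (Filter.Eventually.of_forall fun a x _ => hasFDerivAt_exp_dot (Y a) x)
  · refine (integrable_const (1 : ℝ)).mono' (aesm_exp_dot Y hY w)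
      (Filter.Eventually.of_forall fun a => ?_)
    exact le_of_eq (norm_exp_I_mul _)


set_option linter.unusedSectionVars false

lemma chF_zero [IsProbabilityMeasure μ] (Y : Ω → Fin d → ℝ) : chF μ Y 0 = 1 := by
  simp [chF]

lemma chD_apply [IsProbabilityMeasure μ] (Y : Ω → Fin d → ℝ) (hY : Measurable Y)
    (hint : Integrable Y μ) (w v : Fin d → ℝ) :
    chD μ Y w v = ∫ a, Complex.exp (Complex.I * ((dotL (Y a) w : ℝ) : ℂ)) *
      (Complex.I * ((dotL (Y a) v : ℝ) : ℂ)) ∂μ := by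
  rw [chD, ContinuousLinearMap.integral_apply (integrable_chDi Y hY hint w)]
  refine integral_congr_ae (Filter.Eventually.of_forall fun a => ?_)
  simp [chDi, smul_eq_mul]

lemma integral_dot (Y : Ω → Fin d → ℝ) (hint : Integrable Y μ) (v : Fin d → ℝ) :
    ∫ a, dotL (Y a) v ∂μ = ∑ j, v j * ∫ a, Y a j ∂μ := by
  simp only [dotL_apply]
  rw [integral_finset_sum _ fun j _ => (integrable_coord Y hint j).const_mul (v j)]
  simp [integral_const_mul]

lemma chD_zero_apply [IsProbabilityMeasure μ] (Y : Ω → Fin d → ℝ) (hY : Measurable Y)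
    (hint : Integrable Y μ) (v : Fin d → ℝ) :
    chD μ Y 0 v = Complex.I * ((∑ j, v j * ∫ a, Y a j ∂μ : ℝ) : ℂ) := by
  rw [chD_apply Y hY hint 0 v]
  simp only [map_zero, Complex.ofReal_zero, mul_zero, Complex.exp_zero, one_mul]
  rw [integral_const_mul]
  congr 1
  rw [← integral_dot Y hint v]
  exact integral_ofReal

lemma integrable_dot_abs (Y : Ω → Fin d → ℝ) (hint : Integrable Y μ) (v : Fin d → ℝ) :
    Integrable (fun a => |dotL (Y a) v|) μ := by
  have : Integrable (fun a => dotL (Y a) v) μ := by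
    simp only [dotL_apply]
    exact integrable_finset_sum _ fun j _ => (integrable_coord Y hint j).const_mul (v j)
  exact this.abs

/-- continuity of `α ↦ chD μ Y (α • ω) ω` -/
lemma continuous_chD_line [IsProbabilityMeasure μ] (Y : Ω → Fin d → ℝ) (hY : Measurable Y)
    (hint : Integrable Y μ) (ω : Fin d → ℝ) :
    Continuous fun α : ℝ => chD μ Y (α • ω) ω := by
  have hrw : ∀ α : ℝ, chD μ Y (α • ω) ω =
      ∫ a, Complex.exp (Complex.I * ((dotL (Y a) (α • ω) : ℝ) : ℂ)) *
        (Complex.I * ((dotL (Y a) ω : ℝ) : ℂ)) ∂μ := fun α => chD_apply Y hY hint _ ω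
  simp only [hrw]
  refine continuous_of_dominated (fun α => ?_) (fun α => Filter.Eventually.of_forall fun a => ?_)
    (integrable_dot_abs Y hint ω) (Filter.Eventually.of_forall fun a => ?_)
  · have hcont : Continuous fun y : Fin d → ℝ =>
        Complex.exp (Complex.I * ((dotL y (α • ω) : ℝ) : ℂ)) *
          (Complex.I * ((dotL y ω : ℝ) : ℂ)) := by
      simp only [dotL_apply]; fun_prop
    exact (hcont.comp_stronglyMeasurable hY.stronglyMeasurable).aestronglyMeasurable
  · rw [norm_mul, norm_exp_I_mul, one_mul, norm_mul, Complex.norm_I, one_mul]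
    simp
  · simp only [dotL_apply, Pi.smul_apply, smul_eq_mul]
    fun_prop


end KotAux
namespace KotAux2
set_option linter.unusedSectionVars false

variable {Ω : Type*} [MeasurableSpace Ω] {μ : Measure Ω}

/-- product of independent complex-valued composites -/
lemma indep_integral_mul {β γ : Type*} [MeasurableSpace β] [MeasurableSpace γ]
    [IsProbabilityMeasure μ] {f : Ω → β} {g : Ω → γ}
    (hf : Measurable f) (hg : Measurable g) (h : IndepFun f g μ)
    {F : β → ℂ} {G : γ → ℂ} (hF : Measurable F) (hG : Measurable G) :
    ∫ a, F (f a) * G (g a) ∂μ = (∫ a, F (f a) ∂μ) * ∫ a, G (g a) ∂μ := by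
  have hmap := (indepFun_iff_map_prod_eq_prod_map_map hf.aemeasurable hg.aemeasurable).mp h
  have h1 : ∫ a, F (f a) * G (g a) ∂μ
      = ∫ p : β × γ, F p.1 * G p.2 ∂(μ.map (fun a => (f a, g a))) := by
    exact (integral_map (hf.prodMk hg).aemeasurable
      (((hF.comp measurable_fst).mul (hG.comp measurable_snd)).aestronglyMeasurable)).symm
  haveI : IsProbabilityMeasure (μ.map f) := Measure.isProbabilityMeasure_map hf.aemeasurable
  haveI : IsProbabilityMeasure (μ.map g) := Measure.isProbabilityMeasure_map hg.aemeasurable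
  rw [h1, hmap, integral_prod_mul,
    integral_map hf.aemeasurable hF.aestronglyMeasurable,
    integral_map hg.aemeasurable hG.aestronglyMeasurable]

/-- exp of the integral of the logarithmic derivative -/
lemma exp_integral_logDeriv {h h' : ℝ → ℂ} (hd : ∀ t, HasDerivAt h (h' t) t)
    (hne : ∀ t, h t ≠ 0) (hc : Continuous h') :
    Complex.exp (∫ t in (0:ℝ)..1, h' t / h t) = h 1 / h 0 := by
  have hch : Continuous h := by
    rw [continuous_iff_continuousAt]; exact fun t => (hd t).continuousAt
  have hg : Continuous fun t => h' t / h t := hc.div hch hne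
  set G : ℝ → ℂ := fun t => ∫ s in (0:ℝ)..t, h' s / h s with hGdef
  have hG : ∀ t, HasDerivAt G (h' t / h t) t := fun t =>
    intervalIntegral.integral_hasDerivAt_right (hg.intervalIntegrable _ _)
      hg.stronglyMeasurable.stronglyMeasurableAtFilter hg.continuousAt
  have hF : ∀ t, HasDerivAt (fun t => Complex.exp (-G t) * h t) 0 t := by
    intro t
    have h1 : HasDerivAt (fun t => Complex.exp (-G t))
        (Complex.exp (-G t) * (-(h' t / h t))) t := ((hG t).neg).cexp
    have h2 := h1.mul (hd t)
    convert h2 using 1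
    · rfl
    · rfl
    simp only [mul_assoc, neg_mul, div_mul_cancel₀ _ (hne t)]
    ring
  have hconst : Complex.exp (-G 1) * h 1 = Complex.exp (-G 0) * h 0 :=
    is_const_of_deriv_eq_zero (fun t => (hF t).differentiableAt)
      (fun t => (hF t).deriv) 1 0
  have hG0 : G 0 = 0 := intervalIntegral.integral_same
  rw [hG0, neg_zero, Complex.exp_zero, one_mul] at hconst
  rw [eq_div_iff (hne 0), ← hconst]
  have hJ : (∫ t in (0:ℝ)..1, h' t / h t) = G 1 := rfl
  rw [hJ, ← mul_assoc, ← Complex.exp_add, add_neg_cancel, Complex.exp_zero, one_mul]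

end KotAux2

open KotAux KotAux2 in
lemma rcDot_grad {d : ℕ} {ξ : (Fin d → ℝ) → ℂ} {D : (Fin d → ℝ) →L[ℝ] ℂ} {p : Fin d → ℝ}
    (hD : HasFDerivAt ξ D p) (z : ℂ) (ω : Fin d → ℝ) :
    rcDot ω (fun j => grad ξ p j / z) = D ω / z := by
  unfold rcDot grad
  rw [hD.fderiv]
  simp only [← mul_div_assoc, ← Finset.sum_div]
  congr 1
  have hω : ω = ∑ j, (ω j) • (Pi.single j (1:ℝ) : Fin d → ℝ) := by
    funext k
    rw [Finset.sum_apply]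
    simp [Pi.single_apply]
  conv_rhs => rw [hω]
  rw [map_sum]
  refine Finset.sum_congr rfl fun j _ => ?_
  rw [D.map_smul]
  simp [Complex.real_smul]

open KotAux KotAux2 in
/-- **Multivariate Kotlarski formula for the noise characteristic function.**
Let `X₀, X₁, X₂` be independent integrable random vectors in `ℝ^d`, `Z₁ = X₀ + X₁`,
`Z₂ = X₀ + X₂`, `φ₁(ω) = E[e^{iω·X₁}]`, `ψ(ω₁,ω₂) = E[e^{iω₁·Z₁ + iω₂·Z₂}]`.
If `ψ` is nowhere vanishing then
`φ₁(ω) = exp (-i ω·E[X₀] + ∫₀¹ (∇₁ψ(αω,-αω)/ψ(αω,-αω)) · ω dα)`. -/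
theorem multivariate_kotlarski_noise
    (d : ℕ)
    (Ω : Type*) [MeasurableSpace Ω] (μ : Measure Ω) [IsProbabilityMeasure μ]
    (X₀ X₁ X₂ : Ω → Fin d → ℝ)
    (hX₀ : Measurable X₀) (hX₁ : Measurable X₁) (hX₂ : Measurable X₂)
    (hindep : iIndepFun ![X₀, X₁, X₂] μ)
    (hint₀ : Integrable X₀ μ) (hint₁ : Integrable X₁ μ) (hint₂ : Integrable X₂ μ)
    (φ₁ : (Fin d → ℝ) → ℂ)
    (hφ₁ : ∀ ω : Fin d → ℝ,
      φ₁ ω = ∫ a, Complex.exp (Complex.I * ((∑ j, ω j * X₁ a j : ℝ) : ℂ)) ∂μ)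
    (ψ : (Fin d → ℝ) → (Fin d → ℝ) → ℂ)
    (hψ : ∀ ω₁ ω₂ : Fin d → ℝ,
      ψ ω₁ ω₂ = ∫ a, Complex.exp
        (Complex.I * ((∑ j, ω₁ j * (X₀ a j + X₁ a j) : ℝ) : ℂ) +
         Complex.I * ((∑ j, ω₂ j * (X₀ a j + X₂ a j) : ℝ) : ℂ)) ∂μ)
    (hψne : ∀ ω₁ ω₂ : Fin d → ℝ, ψ ω₁ ω₂ ≠ 0) :
    ∀ ω : Fin d → ℝ,
      φ₁ ω = Complex.exp
        (-Complex.I * ((∑ j, ω j * (∫ a, X₀ a j ∂μ) : ℝ) : ℂ) +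
          ∫ α in (0:ℝ)..1,
            rcDot ω (fun j =>
              grad (fun w => ψ w (-(α • ω))) (α • ω) j / ψ (α • ω) (-(α • ω)))) := by
  intro ω
  have hmeas : ∀ i, Measurable (![X₀, X₁, X₂] i) := by
    intro i; fin_cases i <;> assumption
  have hexpMeas : ∀ w : Fin d → ℝ, Measurable fun y : Fin d → ℝ =>
      Complex.exp (Complex.I * ((dotL y w : ℝ) : ℂ)) := fun w =>
    (continuous_exp_dot_fun w).measurable
  have hI0 : IndepFun (fun a => (X₁ a, X₂ a)) X₀ μ := by
    have := hindep.indepFun_prodMk hmeas 1 2 0 (by decide) (by decide)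
    simpa using this
  have hI12 : IndepFun X₁ X₂ μ := by
    have := hindep.indepFun (i := 1) (j := 2) (by decide)
    simpa using this
  -- factorization of ψ
  have hfact : ∀ w c : Fin d → ℝ,
      ψ w c = chF μ X₀ (w + c) * chF μ X₁ w * chF μ X₂ c := by
    intro w c
    rw [hψ w c]
    have key : ∀ a : Ω,
        Complex.exp (Complex.I * ((∑ j, w j * (X₀ a j + X₁ a j) : ℝ) : ℂ) +
          Complex.I * ((∑ j, c j * (X₀ a j + X₂ a j) : ℝ) : ℂ)) =
        (Complex.exp (Complex.I * ((dotL (X₁ a) w : ℝ) : ℂ)) *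
          Complex.exp (Complex.I * ((dotL (X₂ a) c : ℝ) : ℂ))) *
          Complex.exp (Complex.I * ((dotL (X₀ a) (w + c) : ℝ) : ℂ)) := by
      intro a
      rw [← Complex.exp_add, ← Complex.exp_add]
      congr 1
      have hr : (∑ j, w j * (X₀ a j + X₁ a j)) + (∑ j, c j * (X₀ a j + X₂ a j))
          = dotL (X₁ a) w + dotL (X₂ a) c + dotL (X₀ a) (w + c) := by
        simp only [dotL_apply, Pi.add_apply, mul_add, add_mul, Finset.sum_add_distrib]
        ring
      rw [← mul_add, ← Complex.ofReal_add, hr]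
      push_cast
      ring
    rw [integral_congr_ae (Filter.Eventually.of_forall key)]
    rw [show (fun a => (Complex.exp (Complex.I * ((dotL (X₁ a) w : ℝ) : ℂ)) *
          Complex.exp (Complex.I * ((dotL (X₂ a) c : ℝ) : ℂ))) *
          Complex.exp (Complex.I * ((dotL (X₀ a) (w + c) : ℝ) : ℂ))) =
        (fun a => (fun p : (Fin d → ℝ) × (Fin d → ℝ) =>
            Complex.exp (Complex.I * ((dotL p.1 w : ℝ) : ℂ)) *
            Complex.exp (Complex.I * ((dotL p.2 c : ℝ) : ℂ))) ((fun a => (X₁ a, X₂ a)) a) *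
          (fun y => Complex.exp (Complex.I * ((dotL y (w + c) : ℝ) : ℂ))) (X₀ a)) from rfl]
    rw [indep_integral_mul (hX₁.prodMk hX₂) hX₀ hI0
      (F := fun p : (Fin d → ℝ) × (Fin d → ℝ) =>
        Complex.exp (Complex.I * ((dotL p.1 w : ℝ) : ℂ)) *
        Complex.exp (Complex.I * ((dotL p.2 c : ℝ) : ℂ)))
      (G := fun y => Complex.exp (Complex.I * ((dotL y (w + c) : ℝ) : ℂ)))
      (((hexpMeas w).comp measurable_fst).mul ((hexpMeas c).comp measurable_snd))
      (hexpMeas (w + c))]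
    rw [indep_integral_mul hX₁ hX₂ hI12
      (F := fun y => Complex.exp (Complex.I * ((dotL y w : ℝ) : ℂ)))
      (G := fun y => Complex.exp (Complex.I * ((dotL y c : ℝ) : ℂ)))
      (hexpMeas w) (hexpMeas c)]
    simp only [chF]
    ring
  set M : ℝ := ∑ j, ω j * ∫ a, X₀ a j ∂μ with hM
  set h : ℝ → ℂ := fun α => chF μ X₁ (α • ω) with hh
  set h' : ℝ → ℂ := fun α => chD μ X₁ (α • ω) ω with hh'
  have hd : ∀ α : ℝ, HasDerivAt h (h' α) α := by
    intro α
    have h1 := hasFDerivAt_chF X₁ hX₁ hint₁ (α • ω)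
    have h2 : HasDerivAt (fun α : ℝ => α • ω) ω α := by
      simpa using (hasDerivAt_id α).smul_const ω
    simpa [hh, hh', Function.comp_def] using h1.comp_hasDerivAt α h2
  have hne1 : ∀ α : ℝ, h α ≠ 0 := by
    intro α h0
    have hp := hψne (α • ω) (-(α • ω))
    rw [hfact] at hp
    exact hp (by rw [show chF μ X₁ (α • ω) = h α from rfl, h0, mul_zero, zero_mul])
  have hne2 : ∀ α : ℝ, chF μ X₂ (-(α • ω)) ≠ 0 := by
    intro α h0
    have hp := hψne (α • ω) (-(α • ω))
    rw [hfact] at hp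
    exact hp (by rw [h0, mul_zero])
  have hc : Continuous h' := continuous_chD_line X₁ hX₁ hint₁ ω
  have hch : Continuous h := by
    rw [continuous_iff_continuousAt]; exact fun t => (hd t).continuousAt
  -- the integrand identity
  have hint_eq : ∀ α : ℝ,
      rcDot ω (fun j => grad (fun w => ψ w (-(α • ω))) (α • ω) j / ψ (α • ω) (-(α • ω)))
      = Complex.I * (M : ℂ) + h' α / h α := by
    intro α
    have hψc : (fun w => ψ w (-(α • ω))) = fun w =>
        chF μ X₂ (-(α • ω)) * (chF μ X₀ (w + -(α • ω)) * chF μ X₁ w) := by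
      funext w; rw [hfact]; ring
    have hΦ₀' : HasFDerivAt (fun w => chF μ X₀ (w + -(α • ω)))
        (chD μ X₀ (α • ω + -(α • ω))) (α • ω) := by
      have := (hasFDerivAt_chF X₀ hX₀ hint₀ (α • ω + -(α • ω))).comp (α • ω)
        ((hasFDerivAt_id (α • ω)).add_const (-(α • ω)))
      simpa [Function.comp_def] using this
    have hpc : α • ω + -(α • ω) = 0 := by simp
    rw [hpc] at hΦ₀'
    have hD : HasFDerivAt (fun w => ψ w (-(α • ω)))
        (chF μ X₂ (-(α • ω)) •
          (chF μ X₀ 0 • chD μ X₁ (α • ω) + chF μ X₁ (α • ω) • chD μ X₀ 0)) (α • ω) := by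
      rw [hψc]
      have hmul := hΦ₀'.mul (hasFDerivAt_chF X₁ hX₁ hint₁ (α • ω))
      rw [hpc] at hmul
      exact hmul.const_mul (chF μ X₂ (-(α • ω)))
    rw [rcDot_grad hD]
    rw [hfact (α • ω) (-(α • ω)), hpc]
    simp only [ContinuousLinearMap.smul_apply, ContinuousLinearMap.add_apply,
      chF_zero, one_mul, smul_eq_mul]
    rw [chD_zero_apply X₀ hX₀ hint₀ ω]
    rw [show chD μ X₁ (α • ω) ω = h' α from rfl, show chF μ X₁ (α • ω) = h α from rfl]
    rw [← hM]
    field_simp [hne1 α, hne2 α]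
    ring
  -- compute the interval integral
  have hJ : (∫ α in (0:ℝ)..1,
      rcDot ω (fun j => grad (fun w => ψ w (-(α • ω))) (α • ω) j / ψ (α • ω) (-(α • ω))))
      = Complex.I * (M : ℂ) + ∫ α in (0:ℝ)..1, h' α / h α := by
    rw [intervalIntegral.integral_congr (g := fun α => Complex.I * (M : ℂ) + h' α / h α)
      (fun α _ => hint_eq α)]
    rw [intervalIntegral.integral_add (f := fun _ : ℝ => Complex.I * (M : ℂ))
      (g := fun α => h' α / h α) intervalIntegrable_const
      (((hc.div hch hne1)).intervalIntegrable _ _)]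
    simp
  have hexp := exp_integral_logDeriv hd hne1 hc
  have hh0 : h 0 = 1 := by rw [hh]; simp only [zero_smul]; exact chF_zero X₁
  have hh1 : φ₁ ω = h 1 := by
    rw [hφ₁, hh]
    simp only [one_smul, chF, dotL_apply]
  rw [hh1, hJ]
  rw [show -Complex.I * ((∑ j, ω j * ∫ a, X₀ a j ∂μ : ℝ) : ℂ) +
      (Complex.I * (M : ℂ) + ∫ α in (0:ℝ)..1, h' α / h α)
      = ∫ α in (0:ℝ)..1, h' α / h α by rw [hM]; ring]
  rw [hexp, hh0, div_one]
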